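/- Under the setup, suppose D₁ ≥ D₀ almost surely, for all d, z ∈ {0,1} the pair (Z, W) is conditionally independent of Y_{d,z} given (D₁, D₀), Z is conditionally independent of (D₁, D₀) given W, P(Z = 1, W = w) > 0, and P(AT) > 0 and P(CP) > 0. Then E[Y·D | Z = 1, W = w] = E[Y_{1,1} | AT]·P(AT | W = w) + E[Y_{1,1} | CP]·P(CP | W = w). -/

import Mathlib

open MeasureTheory ProbabilityTheory

/-- `pr μ A` is the probability of the event `A`, as a real number. -/
noncomputable def pr {Ω : Type*} [MeasurableSpace Ω] (μ : Measure Ω) (A : Set Ω) : ℝ :=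
  (μ A).toReal

/-- `prCond μ A B` is the conditional probability `P(A | B) = P(A ∩ B) / P(B)`. -/
noncomputable def prCond {Ω : Type*} [MeasurableSpace Ω] (μ : Measure Ω) (A B : Set Ω) : ℝ :=
  pr μ (A ∩ B) / pr μ B

/-- `cexp μ A f` is the conditional expectation `E[f | A]` of `f` given the event `A`. -/
noncomputable def cexp {Ω : Type*} [MeasurableSpace Ω] (μ : Measure Ω) (A : Set Ω)
    (f : Ω → ℝ) : ℝ :=
  ∫ ω, f ω ∂(μ[|A])

/-- The event `{ω | f ω = c}`. -/
def evEq {Ω : Type*} (f : Ω → ℝ) (c : ℝ) : Set Ω := {ω | f ω = c}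

/-- Always takers: `D₁ = D₀ = 1`. -/
def ATset {Ω : Type*} (D1 D0 : Ω → ℝ) : Set Ω := {ω | D1 ω = 1 ∧ D0 ω = 1}

/-- Never takers: `D₁ = D₀ = 0`. -/
def NTset {Ω : Type*} (D1 D0 : Ω → ℝ) : Set Ω := {ω | D1 ω = 0 ∧ D0 ω = 0}

/-- Compliers: `D₁ = 1`, `D₀ = 0`. -/
def CPset {Ω : Type*} (D1 D0 : Ω → ℝ) : Set Ω := {ω | D1 ω = 1 ∧ D0 ω = 0}

section Aux

variable {Ω : Type*} [MeasurableSpace Ω]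

lemma cexp_eq_setIntegral (μ : Measure Ω) (A : Set Ω) (f : Ω → ℝ) :
    cexp μ A f = (μ A).toReal⁻¹ * ∫ x in A, f x ∂μ := by
  rw [cexp, ProbabilityTheory.cond, integral_smul_measure, ENNReal.toReal_inv, smul_eq_mul]

lemma indep_setIntegral (ν : Measure Ω) [IsProbabilityMeasure ν]
    (p : Ω → ℝ × ℝ) (hp : Measurable p) (f : Ω → ℝ) (hf : Integrable f ν)
    (h : ProbabilityTheory.IndepFun p f ν) (s : Set (ℝ × ℝ)) (hs : MeasurableSet s) :
    ∫ x in p ⁻¹' s, f x ∂ν = (ν (p ⁻¹' s)).toReal * ∫ x, f x ∂ν := by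
  have hcomp : (fun ω => s.indicator (fun _ => (1:ℝ)) (p ω))
      = (p ⁻¹' s).indicator (fun _ => (1:ℝ)) := by
    ext ω; by_cases hω : p ω ∈ s <;> simp [Set.indicator, hω]
  have hind : ProbabilityTheory.IndepFun (fun ω => s.indicator (fun _ => (1:ℝ)) (p ω)) f ν :=
    h.comp (measurable_one.indicator hs) measurable_id
  have hint1 : Integrable (fun ω => s.indicator (fun _ => (1:ℝ)) (p ω)) ν := by
    rw [hcomp]
    exact (integrable_const (1:ℝ)).indicator (hp hs)
  have hmul := hind.integral_mul_eq_mul_integral hint1.1 hf.1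
  have h1 : ∫ ω, s.indicator (fun _ => (1:ℝ)) (p ω) ∂ν = (ν (p ⁻¹' s)).toReal := by
    rw [hcomp, integral_indicator_const _ (hp hs)]; simp [Measure.real]
  have h2 : (fun ω => s.indicator (fun _ => (1:ℝ)) (p ω)) * f
      = (p ⁻¹' s).indicator f := by
    ext ω; by_cases hω : p ω ∈ s <;> simp [Set.indicator, hω]
  rw [h2, integral_indicator (hp hs), h1] at hmul
  exact hmul

lemma keyC (μ : Measure Ω) [IsProbabilityMeasure μ]
    (G : Set Ω) (hG : MeasurableSet G) (hGpos : μ G ≠ 0)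
    (p : Ω → ℝ × ℝ) (hp : Measurable p) (f : Ω → ℝ) (hf : Integrable f μ)
    (hind : ProbabilityTheory.IndepFun p f (μ[|G])) (s : Set (ℝ × ℝ)) (hs : MeasurableSet s) :
    ∫ x in (p ⁻¹' s) ∩ G, f x ∂μ = (μ ((p ⁻¹' s) ∩ G)).toReal * cexp μ G f := by
  haveI : IsProbabilityMeasure (μ[|G]) := ProbabilityTheory.cond_isProbabilityMeasure hGpos
  have hfν : Integrable f (μ[|G]) := by
    rw [ProbabilityTheory.cond]
    exact (hf.restrict).smul_measure (by simp [hGpos])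
  have hmain := indep_setIntegral (μ[|G]) p hp f hfν hind s hs
  have hrestr : ∫ x in p ⁻¹' s, f x ∂(μ[|G])
      = (μ G).toReal⁻¹ * ∫ x in (p ⁻¹' s) ∩ G, f x ∂μ := by
    rw [ProbabilityTheory.cond, Measure.restrict_smul, integral_smul_measure,
      Measure.restrict_restrict (hp hs), ENNReal.toReal_inv, smul_eq_mul]
  have happ : (μ[|G]) (p ⁻¹' s) = (μ G)⁻¹ * μ (G ∩ (p ⁻¹' s)) :=
    ProbabilityTheory.cond_apply hG μ _
  have hGfin : μ G ≠ ⊤ := measure_ne_top μ G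
  have hGt : (0:ℝ) < (μ G).toReal := ENNReal.toReal_pos hGpos hGfin
  have hcexp : ∫ x, f x ∂(μ[|G]) = cexp μ G f := rfl
  rw [hrestr, happ, hcexp] at hmain
  have heq : (μ G).toReal⁻¹ * ∫ x in (p ⁻¹' s) ∩ G, f x ∂μ
      = (μ G).toReal⁻¹ * ((μ ((p ⁻¹' s) ∩ G)).toReal * cexp μ G f) := by
    rw [hmain, ENNReal.toReal_mul, ENNReal.toReal_inv, Set.inter_comm]
    ring
  exact mul_left_cancel₀ (inv_ne_zero hGt.ne') heq

end Aux

/-- mixture decomposition of `E[Y·D | Z = 1, W = w]`. -/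
theorem YD_given_Z1_decomposition
    {Ω : Type*} [MeasurableSpace Ω] (μ : Measure Ω) [IsProbabilityMeasure μ]
    (Y : Fin 2 → Fin 2 → Ω → ℝ) (D1 D0 Z W : Ω → ℝ)
    (hYint : ∀ d z, Integrable (Y d z) μ) (hYmeas : ∀ d z, Measurable (Y d z))
    (hD1v : ∀ ω, D1 ω = 0 ∨ D1 ω = 1) (hD0v : ∀ ω, D0 ω = 0 ∨ D0 ω = 1)
    (hZv : ∀ ω, Z ω = 0 ∨ Z ω = 1) (hWv : ∀ ω, W ω = 0 ∨ W ω = 1)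
    (hD1m : Measurable D1) (hD0m : Measurable D0) (hZm : Measurable Z) (hWm : Measurable W)
    (D : Ω → ℝ) (hD : ∀ ω, D ω = D1 ω * Z ω + D0 ω * (1 - Z ω))
    (Yo : Ω → ℝ)
    (hYo : ∀ ω, Yo ω = (Y 1 1 ω * Z ω + Y 1 0 ω * (1 - Z ω)) * D ω
      + (Y 0 1 ω * Z ω + Y 0 0 ω * (1 - Z ω)) * (1 - D ω))
    (hmono : ∀ᵐ ω ∂μ, D0 ω ≤ D1 ω)
    (hCI1 : ∀ (d z : Fin 2) (i j : ℝ),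
      IndepFun (fun ω => (Z ω, W ω)) (Y d z) (μ[|{ω | D1 ω = i ∧ D0 ω = j}]))
    (hCI2 : ∀ w' : ℝ, IndepFun Z (fun ω => (D1 ω, D0 ω)) (μ[|evEq W w']))
    (w : ℝ) (hw : w = 0 ∨ w = 1)
    (hpos : 0 < pr μ (evEq Z 1 ∩ evEq W w))
    (hAT : 0 < pr μ (ATset D1 D0)) (hCP : 0 < pr μ (CPset D1 D0)) :
    cexp μ (evEq Z 1 ∩ evEq W w) (fun ω => Yo ω * D ω)
      = cexp μ (ATset D1 D0) (fun ω => Y 1 1 ω) * prCond μ (ATset D1 D0) (evEq W w)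
        + cexp μ (CPset D1 D0) (fun ω => Y 1 1 ω) * prCond μ (CPset D1 D0) (evEq W w) := by
  classical
  set B : Set Ω := evEq Z 1 ∩ evEq W w with hBdef
  have hpZWm : Measurable (fun ω => (Z ω, W ω)) := hZm.prodMk hWm
  have hpDm : Measurable (fun ω => (D1 ω, D0 ω)) := hD1m.prodMk hD0m
  have hBset : B = (fun ω => (Z ω, W ω)) ⁻¹' {((1:ℝ), w)} := by
    ext x; simp [hBdef, evEq, Prod.ext_iff]
  have hATset : ATset D1 D0 = (fun ω => (D1 ω, D0 ω)) ⁻¹' {((1:ℝ), (1:ℝ))} := by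
    ext x; simp [ATset, Prod.ext_iff]
  have hCPset : CPset D1 D0 = (fun ω => (D1 ω, D0 ω)) ⁻¹' {((1:ℝ), (0:ℝ))} := by
    ext x; simp [CPset, Prod.ext_iff]
  have hBm : MeasurableSet B := by
    rw [hBset]; exact hpZWm (measurableSet_singleton _)
  have hATm : MeasurableSet (ATset D1 D0) := by
    rw [hATset]; exact hpDm (measurableSet_singleton _)
  have hCPm : MeasurableSet (CPset D1 D0) := by
    rw [hCPset]; exact hpDm (measurableSet_singleton _)
  have hWwm : MeasurableSet (evEq W w) := hWm (measurableSet_singleton w)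
  have hμB0 : μ B ≠ 0 := by
    intro h; rw [pr, h] at hpos; simp at hpos
  have hμAT0 : μ (ATset D1 D0) ≠ 0 := by
    intro h; rw [pr, h] at hAT; simp at hAT
  have hμCP0 : μ (CPset D1 D0) ≠ 0 := by
    intro h; rw [pr, h] at hCP; simp at hCP
  have hμWw0 : μ (evEq W w) ≠ 0 := by
    intro h
    exact hμB0 (le_antisymm (le_trans (measure_mono Set.inter_subset_right) h.le) (zero_le))
  -- Step 1: on B, Yo * D = Y 1 1 * D1
  have hstep1 : ∫ x in B, Yo x * D x ∂μ = ∫ x in B, Y 1 1 x * D1 x ∂μ := by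
    refine setIntegral_congr_fun hBm ?_
    intro x hx
    show Yo x * D x = Y 1 1 x * D1 x
    have hZx : Z x = 1 := hx.1
    have hDx : D x = D1 x := by rw [hD x, hZx]; ring
    rcases hD1v x with h | h
    · simp [hDx, h]
    · rw [hYo x, hDx, hZx, h]; ring
  -- Step 2: Y 1 1 * D1 is the indicator of AT ∪ CP applied to Y 1 1
  have hindic : (fun x => Y 1 1 x * D1 x)
      = (ATset D1 D0 ∪ CPset D1 D0).indicator (Y 1 1) := by
    funext x
    rcases hD1v x with h | h
    · rw [Set.indicator_of_notMem, h, mul_zero]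
      rintro (⟨h1, -⟩ | ⟨h1, -⟩) <;> rw [h] at h1 <;> norm_num at h1
    · rw [Set.indicator_of_mem, h, mul_one]
      rcases hD0v x with h0 | h0
      · exact Or.inr ⟨h, h0⟩
      · exact Or.inl ⟨h, h0⟩
  have hdisj : Disjoint (B ∩ ATset D1 D0) (B ∩ CPset D1 D0) := by
    rw [Set.disjoint_left]
    rintro x ⟨-, -, h1⟩ ⟨-, -, h0⟩
    rw [h1] at h0; norm_num at h0
  have hstep2 : ∫ x in B, Y 1 1 x * D1 x ∂μ
      = (∫ x in B ∩ ATset D1 D0, Y 1 1 x ∂μ) + ∫ x in B ∩ CPset D1 D0, Y 1 1 x ∂μ := by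
    rw [hindic, setIntegral_indicator (hATm.union hCPm), Set.inter_union_distrib_left,
      setIntegral_union hdisj (hBm.inter hCPm) (hYint 1 1).integrableOn
      (hYint 1 1).integrableOn]
  -- Step 3: independence of (Z, W) and Y 1 1 given the groups
  have hkeyAT : ∫ x in B ∩ ATset D1 D0, Y 1 1 x ∂μ
      = (μ (B ∩ ATset D1 D0)).toReal * cexp μ (ATset D1 D0) (Y 1 1) := by
    have h := keyC μ (ATset D1 D0) hATm hμAT0 (fun ω => (Z ω, W ω)) hpZWm (Y 1 1)
      (hYint 1 1) (hCI1 1 1 1 1) {((1:ℝ), w)} (measurableSet_singleton _)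
    rw [← hBset] at h; exact h
  have hkeyCP : ∫ x in B ∩ CPset D1 D0, Y 1 1 x ∂μ
      = (μ (B ∩ CPset D1 D0)).toReal * cexp μ (CPset D1 D0) (Y 1 1) := by
    have h := keyC μ (CPset D1 D0) hCPm hμCP0 (fun ω => (Z ω, W ω)) hpZWm (Y 1 1)
      (hYint 1 1) (hCI1 1 1 1 0) {((1:ℝ), w)} (measurableSet_singleton _)
    rw [← hBset] at h; exact h
  -- Step 4: factorization of probabilities using hCI2
  have haR : (0:ℝ) < (μ (evEq W w)).toReal :=
    ENNReal.toReal_pos hμWw0 (measure_ne_top _ _)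
  have hfact : ∀ s : Set (ℝ × ℝ), MeasurableSet s →
      (μ (B ∩ (fun ω => (D1 ω, D0 ω)) ⁻¹' s)).toReal
        = pr μ B * prCond μ ((fun ω => (D1 ω, D0 ω)) ⁻¹' s) (evEq W w) := by
    intro s hs
    have heq := (hCI2 w).measure_inter_preimage_eq_mul {(1:ℝ)} s
      (measurableSet_singleton _) hs
    rw [ProbabilityTheory.cond_apply hWwm, ProbabilityTheory.cond_apply hWwm,
      ProbabilityTheory.cond_apply hWwm] at heq
    have hreal := congrArg ENNReal.toReal heq
    rw [ENNReal.toReal_mul, ENNReal.toReal_mul, ENNReal.toReal_mul, ENNReal.toReal_mul,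
      ENNReal.toReal_inv] at hreal
    have e1 : evEq W w ∩ (Z ⁻¹' {1} ∩ (fun ω => (D1 ω, D0 ω)) ⁻¹' s)
        = B ∩ (fun ω => (D1 ω, D0 ω)) ⁻¹' s := by
      ext x; simp only [hBdef, evEq, Set.mem_inter_iff, Set.mem_preimage,
        Set.mem_singleton_iff, Set.mem_setOf_eq]; tauto
    have e2 : evEq W w ∩ Z ⁻¹' {1} = B := by
      ext x; simp only [hBdef, evEq, Set.mem_inter_iff, Set.mem_preimage,
        Set.mem_singleton_iff, Set.mem_setOf_eq]; tauto
    have e3 : evEq W w ∩ (fun ω => (D1 ω, D0 ω)) ⁻¹' s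
        = (fun ω => (D1 ω, D0 ω)) ⁻¹' s ∩ evEq W w := Set.inter_comm _ _
    rw [e1, e2, e3] at hreal
    field_simp at hreal
    have h4 : (μ (B ∩ (fun ω => (D1 ω, D0 ω)) ⁻¹' s)).toReal * (μ (evEq W w)).toReal
          * (μ (evEq W w)).toReal
        = (μ B).toReal * (μ ((fun ω => (D1 ω, D0 ω)) ⁻¹' s ∩ evEq W w)).toReal
          * (μ (evEq W w)).toReal := by linear_combination (μ (evEq W w)).toReal * hreal
    have h5 := mul_right_cancel₀ haR.ne' h4
    rw [pr, prCond, pr, pr, ← mul_div_assoc, eq_div_iff haR.ne']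
    exact h5
  have hA2 : (μ (B ∩ ATset D1 D0)).toReal
      = pr μ B * prCond μ (ATset D1 D0) (evEq W w) := by
    rw [hATset]; exact hfact _ (measurableSet_singleton _)
  have hC2 : (μ (B ∩ CPset D1 D0)).toReal
      = pr μ B * prCond μ (CPset D1 D0) (evEq W w) := by
    rw [hCPset]; exact hfact _ (measurableSet_singleton _)
  -- Assemble
  have hBr : (0:ℝ) < (μ B).toReal := hpos
  rw [cexp_eq_setIntegral, hstep1, hstep2, hkeyAT, hkeyCP, hA2, hC2]
  have hprB : pr μ B = (μ B).toReal := rfl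
  rw [hprB]
  field_simp
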